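/- Let n be a positive integer, b > 0, c ∈ ℝⁿ with c_i > 0 for all i, and let Y = {y ∈ ℝⁿ | Σ_i y_i ≤ b and 0 ≤ y_i ≤ c_i for all i}. For every z ∈ ℝⁿ with z_i ≥ 0 for all i, there exists λ ≥ 0 such that the vector y given by y_i = min(max(z_i − λ, 0), c_i) for all i satisfies Σ_i y_i ≤ b, satisfies λ·(Σ_i y_i − b) = 0, and is the Euclidean projection of z onto Y. -/

import Mathlib

/-- For every `z` with nonnegative entries there exists `λ ≥ 0` such that
`y i = min (max (z i − λ) 0) (c i)` satisfies `∑ y ≤ b`, the complementary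
slackness condition `λ·(∑ y − b) = 0`, and `y` is the Euclidean projection of
`z` onto `Y = {y | ∑ y ≤ b, 0 ≤ y i ≤ c i}`. -/
theorem exists_projection_lam
    (n : ℕ) (hn : 0 < n) (b : ℝ) (hb : 0 < b)
    (c : EuclideanSpace ℝ (Fin n)) (hc : ∀ i, 0 < c i)
    (z : EuclideanSpace ℝ (Fin n)) (hz : ∀ i, 0 ≤ z i) :
    ∃ lam : ℝ, 0 ≤ lam ∧ ∃ y : EuclideanSpace ℝ (Fin n),
      (∀ i, y i = min (max (z i - lam) 0) (c i)) ∧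
      (∑ i, y i ≤ b) ∧
      (lam * ((∑ i, y i) - b) = 0) ∧
      (∀ w : EuclideanSpace ℝ (Fin n),
        (∑ i, w i ≤ b ∧ ∀ i, 0 ≤ w i ∧ w i ≤ c i) →
          ‖y - z‖ ≤ ‖w - z‖ ∧ (‖y - z‖ = ‖w - z‖ → w = y)) := by
  set f : ℝ → ℝ := fun lam => ∑ i, min (max (z i - lam) 0) (c i) with hf
  have hcont : Continuous f := by
    apply continuous_finset_sum
    intro i _
    exact ((continuous_const.sub continuous_id).max continuous_const).min continuous_const
  obtain ⟨lam, hlam0, hfb, hcs⟩ : ∃ lam, 0 ≤ lam ∧ f lam ≤ b ∧ lam * (f lam - b) = 0 := by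
    by_cases h0 : f 0 ≤ b
    · exact ⟨0, le_refl 0, h0, by ring⟩
    · push_neg at h0
      set M := ∑ i, z i with hM
      have hM0 : 0 ≤ M := Finset.sum_nonneg fun i _ => hz i
      have hfM : f M = 0 := by
        apply Finset.sum_eq_zero
        intro i _
        have hzi : z i ≤ M := Finset.single_le_sum (fun j _ => hz j) (Finset.mem_univ i)
        have : z i - M ≤ 0 := by linarith
        simp [max_eq_right this, min_eq_left (hc i).le]
      have hbmem : b ∈ Set.Icc (f M) (f 0) := ⟨by rw [hfM]; exact hb.le, h0.le⟩
      obtain ⟨lam, hlamIcc, hflam⟩ := intermediate_value_Icc' hM0 hcont.continuousOn hbmem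
      exact ⟨lam, hlamIcc.1, hflam.le, by rw [hflam]; ring⟩
  refine ⟨lam, hlam0, (WithLp.toLp 2 (fun i => min (max (z i - lam) 0) (c i)) : EuclideanSpace ℝ (Fin n)),
    fun i => rfl, hfb, hcs, ?_⟩
  set y : EuclideanSpace ℝ (Fin n) := WithLp.toLp 2 (fun i => min (max (z i - lam) 0) (c i)) with hy
  intro w ⟨hwsum, hwbd⟩
  have hkey : ∀ i, (z i - y i) * (w i - y i) ≤ lam * (w i - y i) := by
    intro i
    have hw0 := (hwbd i).1
    have hwc := (hwbd i).2
    rcases le_total (z i - lam) 0 with h1 | h1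
    · have : y i = 0 := by
        simp only [hy, max_eq_right h1, min_eq_left (hc i).le]
      rw [this]
      have : z i ≤ lam := by linarith
      nlinarith
    · rcases le_total (z i - lam) (c i) with h2 | h2
      · have : y i = z i - lam := by
          simp only [hy, max_eq_left h1, min_eq_left h2]
        rw [this]
        exact le_of_eq (by ring)
      · have : y i = c i := by
          simp only [hy, max_eq_left h1, min_eq_right h2]
        rw [this]
        nlinarith
  have hinner : (∑ i, (w i - y i) * (z i - y i)) ≤ 0 := by
    have h1 : (∑ i, (w i - y i) * (z i - y i)) ≤ ∑ i, lam * (w i - y i) := by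
      apply Finset.sum_le_sum
      intro i _
      have := hkey i
      nlinarith [hkey i]
    have h2 : (∑ i, lam * (w i - y i)) = lam * (∑ i, w i) - lam * (∑ i, y i) := by
      rw [← Finset.mul_sum, Finset.sum_sub_distrib, mul_sub]
    have h3 : lam * (∑ i, y i) = lam * b := by linarith [hcs]
    have h4 : lam * (∑ i, w i) ≤ lam * b := mul_le_mul_of_nonneg_left hwsum hlam0
    linarith
  have hip : inner ℝ (w - y) (z - y) = (∑ i, (w i - y i) * (z i - y i)) := by
    simp [PiLp.inner_apply, PiLp.sub_apply, RCLike.inner_apply]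
    exact Finset.sum_congr rfl fun i _ => mul_comm _ _
  have hnorm : ‖w - z‖ ^ 2 = ‖w - y‖ ^ 2 + 2 * inner ℝ (w - y) (y - z) + ‖y - z‖ ^ 2 := by
    have : w - z = (w - y) + (y - z) := by abel
    rw [this, norm_add_sq_real]
  have hflip : (inner ℝ (w - y) (y - z) : ℝ) = - inner ℝ (w - y) (z - y) := by
    rw [← inner_neg_right]
    congr 1
    abel
  have hge : ‖y - z‖ ^ 2 + ‖w - y‖ ^ 2 ≤ ‖w - z‖ ^ 2 := by
    rw [hnorm, hflip, hip]
    linarith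
  have hny := norm_nonneg (y - z)
  have hnw := norm_nonneg (w - z)
  have hnwy := norm_nonneg (w - y)
  constructor
  · nlinarith
  · intro heq
    have : ‖w - y‖ = 0 := by nlinarith
    have := norm_eq_zero.mp this
    have : w = y := by
      rwa [sub_eq_zero] at this
    exact this
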